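/- For sinh-arsinh distributions F = Φ∘S_{ν_F,τ_F} and G = Φ∘S_{ν_G,τ_G} (Φ the standard normal cdf), R_{FG}(t) = G^{-1}(F(t)) = S_{ν̃,τ̃}(t) where ν̃ = (ν_F − ν_G)/τ_G and τ̃ = τ_F/τ_G. In particular, whether F ≤₃ G holds depends only on ν̃ and τ̃. -/

import Mathlib

/-- The sinh-arsinh transformation `S_{ν,τ} t = sinh(τ·arsinh t − ν)`. -/
noncomputable def SAS (ν τ : ℝ) (t : ℝ) : ℝ := Real.sinh (τ * Real.arsinh t - ν)

lemma SAS_comp (a b ν τ t : ℝ) : SAS a b (SAS ν τ t) = SAS (b * ν + a) (b * τ) t := by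
  simp only [SAS, Real.arsinh_sinh]
  ring_nf

/-- For sinh-arsinh distributions `F = Φ ∘ S_{ν_F,τ_F}` and
`G = Φ ∘ S_{ν_G,τ_G}` (with `Φ` the base cdf, e.g. the standard normal, and
`Φ⁻¹ ∘ Φ = id`): `S_{ν,τ}⁻¹ = S_{−ν/τ, 1/τ}`, and
`R_{FG} = G⁻¹ ∘ F = S_{ν̃,τ̃}` with `ν̃ = (ν_F − ν_G)/τ_G`, `τ̃ = τ_F/τ_G`.
In particular whether `F ≤₃ G` holds depends only on `ν̃` and `τ̃`. -/
theorem stmt18 (νF τF νG τG : ℝ) (hF : 0 < τF) (hG : 0 < τG)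
    (Φ Φinv : ℝ → ℝ) (hΦ : Function.LeftInverse Φinv Φ) :
    -- S_{ν,τ}⁻¹ = S_{−ν/τ,1/τ}
    (∀ t : ℝ, SAS (-(νG/τG)) (1/τG) (SAS νG τG t) = t) ∧
    -- R_{FG}(t) = G⁻¹(F(t)) = S_{ν̃,τ̃}(t)
    (∀ t : ℝ,
      (SAS (-(νG/τG)) (1/τG) ∘ Φinv) ((Φ ∘ SAS νF τF) t)
        = SAS ((νF - νG)/τG) (τF/τG) t) ∧
    -- in particular, F ≤₃ G depends only on ν̃ and τ̃
    ((∀ t : ℝ, 0 ≤ deriv (deriv (deriv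
        (SAS (-(νG/τG)) (1/τG) ∘ Φinv ∘ Φ ∘ SAS νF τF))) t) ↔
      (∀ t : ℝ, 0 ≤ deriv (deriv (deriv
        (SAS ((νF - νG)/τG) (τF/τG)))) t)) := by
  have h2 : ∀ t : ℝ,
      (SAS (-(νG/τG)) (1/τG) ∘ Φinv) ((Φ ∘ SAS νF τF) t)
        = SAS ((νF - νG)/τG) (τF/τG) t := by
    intro t
    simp only [Function.comp_apply, hΦ (SAS νF τF t), SAS_comp]
    congr 1 <;> field_simp <;> ring
  refine ⟨fun t => ?_, h2, ?_⟩
  · rw [SAS_comp, SAS]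
    have h1 : τG⁻¹ * νG + -(νG/τG) = 0 := by field_simp; ring
    have h2 : τG⁻¹ * τG = 1 := inv_mul_cancel₀ hG.ne'
    simp [one_div, h1, h2]
  · have heq : (SAS (-(νG/τG)) (1/τG) ∘ Φinv ∘ Φ ∘ SAS νF τF)
        = SAS ((νF - νG)/τG) (τF/τG) := funext fun t => h2 t
    rw [heq]
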